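/- Let G be a group scheme (or just consider modules over a ring), and let N be a module with a filtration 0 = N₀ ⊆ N₁ ⊆ ... ⊆ N_ℓ = N, and F a left-exact additive functor to modules with finite-length values, with right derived functors R^n F. If the character (or length/composition-factor multiset) of R^n F(N) equals the sum of those of R^n F(N_i/N_{i-1}), then for each i the natural map R^n F(N_{i-1}) → R^n F(N_i) is injective and R^n F(N_i)/R^n F(N_{i-1}) ≅ R^n F(N_i/N_{i-1}). -/
import Mathlib


/-- Abstract homological lemma (Lemma 6): let `N` have a filtration
`0 = N₀ ⊆ N₁ ⊆ ⋯ ⊆ N_ℓ = N` and `F` be a left-exact additive functor with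
right derived functors `R^n F` taking finite-length (here: finite-dimensional)
values.  Writing `A i = R^n F(N_i)` (so `A 0 = 0`) and
`B (i+1) = R^n F(N_{i+1}/N_i)`, the long exact sequences give exact sequences
`A i → A (i+1) → B (i+1)`.  If `dim R^n F(N) = Σ_i dim R^n F(N_i/N_{i-1})`,
then each map `R^n F(N_{i-1}) → R^n F(N_i)` is injective, each
`R^n F(N_i) → R^n F(N_i/N_{i-1})` is surjective, and
`R^n F(N_i)/R^n F(N_{i-1}) ≅ R^n F(N_i/N_{i-1})`. -/
theorem filtration_derived_functor_lemma (k : Type*) [Field k] (ℓ : ℕ)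
    (A B : ℕ → Type*)
    [∀ i, AddCommGroup (A i)] [∀ i, Module k (A i)] [∀ i, FiniteDimensional k (A i)]
    [∀ i, AddCommGroup (B i)] [∀ i, Module k (B i)] [∀ i, FiniteDimensional k (B i)]
    (hA0 : Subsingleton (A 0))
    (f : ∀ i, A i →ₗ[k] A (i + 1)) (g : ∀ i, A (i + 1) →ₗ[k] B (i + 1))
    (hex : ∀ i, Function.Exact (f i) (g i))
    (hdim : Module.finrank k (A ℓ) =
      ∑ i ∈ Finset.range ℓ, Module.finrank k (B (i + 1))) :
    ∀ i < ℓ, Function.Injective (f i) ∧ Function.Surjective (g i) ∧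
      Nonempty ((A (i + 1) ⧸ LinearMap.range (f i)) ≃ₗ[k] B (i + 1)) := by
  have hker : ∀ i, LinearMap.ker (g i) = LinearMap.range (f i) :=
    fun i => LinearMap.exact_iff.mp (hex i)
  set d : ℕ → ℕ := fun i => Module.finrank k (A i) with hd
  set a : ℕ → ℕ := fun i => Module.finrank k (LinearMap.range (f i)) with ha'
  set b : ℕ → ℕ := fun i => Module.finrank k (LinearMap.range (g i)) with hb'
  have hd0 : d 0 = 0 := Module.finrank_zero_of_subsingleton
  have hsplit : ∀ i, d (i + 1) = a i + b i := by
    intro i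
    have h := LinearMap.finrank_range_add_finrank_ker (g i)
    rw [hker i] at h
    simpa [hd, ha', hb', Nat.add_comm] using h.symm
  have ha : ∀ i, a i ≤ d i := fun i => (f i).finrank_range_le
  have hb : ∀ i, b i ≤ Module.finrank k (B (i + 1)) :=
    fun i => Submodule.finrank_le _
  have htel : ∑ i ∈ Finset.range ℓ, d (i + 1) = ∑ i ∈ Finset.range ℓ, d i + d ℓ := by
    have h1 := Finset.sum_range_succ' d ℓ
    have h2 := Finset.sum_range_succ d ℓ
    omega
  have hsum : ∑ i ∈ Finset.range ℓ, (a i + b i)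
      = ∑ i ∈ Finset.range ℓ, (d i + Module.finrank k (B (i + 1))) := by
    have h1 : ∑ i ∈ Finset.range ℓ, (a i + b i) = ∑ i ∈ Finset.range ℓ, d (i + 1) :=
      Finset.sum_congr rfl fun i _ => (hsplit i).symm
    have hdl : d ℓ = ∑ i ∈ Finset.range ℓ, Module.finrank k (B (i + 1)) := hdim
    rw [h1, htel, hdl, Finset.sum_add_distrib]
  have hterm : ∀ i ∈ Finset.range ℓ, a i + b i = d i + Module.finrank k (B (i + 1)) := by
    refine (Finset.sum_eq_sum_iff_of_le ?_).mp hsum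
    intro i _
    exact Nat.add_le_add (ha i) (hb i)
  intro i hi
  have h := hterm i (Finset.mem_range.mpr hi)
  have hai : a i = d i := by have := ha i; have := hb i; omega
  have hbi : b i = Module.finrank k (B (i + 1)) := by have := ha i; have := hb i; omega
  have hinj : Function.Injective (f i) := by
    have h1 := LinearMap.finrank_range_add_finrank_ker (f i)
    have hai' : Module.finrank k (LinearMap.range (f i)) = Module.finrank k (A i) := hai
    have hk : Module.finrank k (LinearMap.ker (f i)) = 0 := by omega
    rw [← LinearMap.ker_eq_bot]
    exact Submodule.finrank_eq_zero.mp hk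
  have hrg : LinearMap.range (g i) = ⊤ :=
    Submodule.eq_top_of_finrank_eq hbi
  have hsurj : Function.Surjective (g i) := LinearMap.range_eq_top.mp hrg
  refine ⟨hinj, hsurj, ⟨?_⟩⟩
  exact (Submodule.quotEquivOfEq _ _ (hker i).symm).trans
    ((g i).quotKerEquivOfSurjective hsurj)
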